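/- Let K have size k ≥ 2 and p ∈ [1/k, 1]. For the product channel N(x,y) = Π_i q(y_i|x_i) on K^n with q(y|x) = p if y=x and (1−p)/(k−1) otherwise, and uniform prior π(x) = 1/k^n, the posterior single-target vulnerability Σ_{y ∈ K^n} max_{w ∈ K} Σ_{x : x₀ = w} (1/k^n)·N(x,y) equals p. -/

import Mathlib

/-- The k-RR noise channel N(x,y) = Π_i q(y_i|x_i), with q(y|x) = p if y = x
and (1−p)/(k−1) otherwise. -/
noncomputable def Nchan (n k : ℕ) (p : ℝ) (x y : Fin n → Fin k) : ℝ :=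
  ∏ i, if y i = x i then p else (1 - p) / (k - 1)

lemma sum_filter_nchan (n k : ℕ) (hk : 2 ≤ k) (p : ℝ) (y : Fin n → Fin k)
    (z : Fin n) (w : Fin k) :
    ∑ x ∈ Finset.univ.filter (fun x : Fin n → Fin k => x z = w), Nchan n k p x y
      = if y z = w then p else (1 - p) / ((k : ℝ) - 1) := by
  classical
  have hkR : (2:ℝ) ≤ (k:ℝ) := by exact_mod_cast hk
  set c : ℝ := (1 - p) / ((k:ℝ) - 1) with hc
  set f : Fin n → Fin k → ℝ := fun i v =>
    if i = z then (if v = w then (if y i = v then p else c) else 0)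
    else (if y i = v then p else c) with hf
  have step1 : ∑ x ∈ Finset.univ.filter (fun x : Fin n → Fin k => x z = w),
      Nchan n k p x y = ∑ x : Fin n → Fin k, ∏ i, f i (x i) := by
    rw [Finset.sum_filter]
    refine Finset.sum_congr rfl fun x _ => ?_
    by_cases hx : x z = w
    · simp only [hx, if_true, Nchan]
      refine Finset.prod_congr rfl fun i _ => ?_
      by_cases hi : i = z
      · subst hi; simp [hf, hx, hc]
      · simp [hf, hi, hc]
    · rw [if_neg hx]
      symm
      apply Finset.prod_eq_zero (Finset.mem_univ z)
      simp [hf, hx]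
  have step2 : (∏ i, ∑ v, f i v) = ∑ x : Fin n → Fin k, ∏ i, f i (x i) := by
    rw [Finset.prod_univ_sum, Fintype.piFinset_univ]
  rw [step1, ← step2]
  have hsum_ne : ∀ i : Fin n, i ≠ z → (∑ v, f i v) = 1 := by
    intro i hi
    simp only [hf, if_neg hi]
    have hrw : ∀ v : Fin k, (if y i = v then p else c) = c + (if y i = v then p - c else 0) := by
      intro v; split <;> ring
    simp only [hrw]
    rw [Finset.sum_add_distrib, Finset.sum_const, Finset.sum_ite_eq,
      if_pos (Finset.mem_univ _)]
    have hck : ((k:ℝ) - 1) * c = 1 - p := by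
      rw [hc, mul_comm, div_mul_cancel₀ _ (by linarith : ((k:ℝ) - 1) ≠ 0)]
    simp only [Finset.card_univ, Fintype.card_fin, nsmul_eq_mul]
    linarith
  rw [Finset.prod_eq_single z (fun i _ hi => hsum_ne i hi)
    (fun h => absurd (Finset.mem_univ z) h)]
  rw [Finset.sum_eq_single w (by intro v _ hv; simp [hf, hv])
    (fun h => absurd (Finset.mem_univ w) h)]
  simp [hf]

/-- the posterior single-target vulnerability of the k-RR channel
under the uniform prior equals p, for p ≥ 1/k. -/
theorem stmt11 (n k : ℕ) (hn : 1 ≤ n) (hk : 2 ≤ k) (p : ℝ)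
    (hp : 1 / (k : ℝ) ≤ p) (hp1 : p ≤ 1) :
    ∑ y : Fin n → Fin k,
      Finset.univ.sup' ⟨⟨0, by omega⟩, Finset.mem_univ _⟩ (fun w : Fin k =>
        ∑ x ∈ Finset.univ.filter (fun x : Fin n → Fin k => x ⟨0, by omega⟩ = w),
          (1 / (k : ℝ) ^ n) * Nchan n k p x y)
      = p := by
  classical
  have hkR : (2:ℝ) ≤ (k:ℝ) := by exact_mod_cast hk
  have hpk : 1 ≤ p * (k:ℝ) := by
    rw [div_le_iff₀ (by linarith)] at hp
    linarith
  have hc_le : (1 - p) / ((k:ℝ) - 1) ≤ p := by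
    rw [div_le_iff₀ (by linarith)]
    nlinarith
  have hpos : (0:ℝ) < (k:ℝ) ^ n := by positivity
  have hterm : ∀ y : Fin n → Fin k,
      Finset.univ.sup' ⟨⟨0, by omega⟩, Finset.mem_univ _⟩ (fun w : Fin k =>
        ∑ x ∈ Finset.univ.filter (fun x : Fin n → Fin k => x ⟨0, by omega⟩ = w),
          (1 / (k : ℝ) ^ n) * Nchan n k p x y) = p / (k:ℝ) ^ n := by
    intro y
    apply le_antisymm
    · apply Finset.sup'_le
      intro w _
      rw [← Finset.mul_sum, sum_filter_nchan n k hk p y _ w]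
      rw [show p / (k:ℝ) ^ n = (1 / (k:ℝ) ^ n) * p by ring]
      split
      · exact le_refl _
      · exact mul_le_mul_of_nonneg_left hc_le (by positivity)
    · refine le_trans (le_of_eq ?_)
        (Finset.le_sup' _ (Finset.mem_univ (y ⟨0, by omega⟩)))
      rw [← Finset.mul_sum, sum_filter_nchan n k hk p y _ (y ⟨0, by omega⟩), if_pos rfl]
      ring
  rw [Finset.sum_congr rfl (fun y _ => hterm y), Finset.sum_const]
  simp only [Finset.card_univ, Fintype.card_fun, Fintype.card_fin, nsmul_eq_mul]
  push_cast
  field_simp
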